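/- Let M = ![![0,0,1,0],![1,0,0,0],![0,0,1/2,1/2],![0,1,0,0]] and P i j = M j i. For the Nash equilibrium p = ![0,1/2,1/2,0], q = ![1/3,0,0,2/3]: every pure strategy in the support of p (rows B and C) achieves the Magician's equilibrium payoff 1/3 against q, i.e., ∑ j, M 1 j * q j = 1/3 and ∑ j, M 2 j * q j = 1/3, while rows A and D achieve at most 1/3; and every pure strategy in the support of q (columns A and D) achieves the Physician's equilibrium payoff 1/2 against p, i.e., ∑ i, p i * P i 0 = 1/2 and ∑ i, p i * P i 3 = 1/2, while columns B and C achieve at most 1/2. -/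

import Mathlib

theorem stmt_18
    (M P : Fin 4 → Fin 4 → ℚ)
    (hM : M = ![![0,0,1,0],![1,0,0,0],![0,0,1/2,1/2],![0,1,0,0]])
    (hP : ∀ i j, P i j = M j i)
    (p q : Fin 4 → ℚ)
    (hp : p = ![0, 1/2, 1/2, 0]) (hq : q = ![1/3, 0, 0, 2/3]) :
    (∑ j : Fin 4, M 1 j * q j = 1/3) ∧
    (∑ j : Fin 4, M 2 j * q j = 1/3) ∧
    (∑ j : Fin 4, M 0 j * q j ≤ 1/3) ∧
    (∑ j : Fin 4, M 3 j * q j ≤ 1/3) ∧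
    (∑ i : Fin 4, p i * P i 0 = 1/2) ∧
    (∑ i : Fin 4, p i * P i 3 = 1/2) ∧
    (∑ i : Fin 4, p i * P i 1 ≤ 1/2) ∧
    (∑ i : Fin 4, p i * P i 2 ≤ 1/2) := by
  subst hM hp hq
  simp only [hP]
  norm_num [Fin.sum_univ_four, Matrix.cons_val_two, Matrix.cons_val_three, Matrix.vecHead, Matrix.vecTail]
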